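/- Let H^{2m+1}_{2k+1} ∈ ℂ for m, k ≥ 0, and extend the notation by H^a_b := 0 whenever b ≤ 0 or b is even. Define structure constants for indices ≥ 0 by: C^{2l}_{2n,2m} = δ^l_{n+m}; C^{2l+1}_{2n,2m} = 0; C^{2l+1}_{2n,2m+1} = C^{2l+1}_{2m+1,2n} = δ^l_{m+n} + H^{2m+1}_{2(n−l)−1}; C^{2l}_{2n,2m+1} = C^{2l}_{2m+1,2n} = 0; C^{2l}_{2n+1,2m+1} = δ^l_{m+n+1} + H^{2n+1}_{2(m−l)+1} + H^{2m+1}_{2(n−l)+1}; C^{2l+1}_{2n+1,2m+1} = 0. Then the quadratic relations H^{2m+1}_{2(k+n)+1} − H^{2(m+n)+1}_{2k+1} − ∑_{s=0}^{n−1} H^{2m+1}_{2s+1} H^{2(n−s)−1}_{2k+1} = 0 (m, k ≥ 0, n ≥ 1) and H^{2m+1}_{2(k+n)+1} + H^{2n+1}_{2(k+m)+1} + ∑_{l=0}^{k−1} H^{2m+1}_{2l+1} H^{2n+1}_{2(k−l)−1} = 0 (m, n ≥ 0, k ≥ 1) hold if and only if the associativity conditions ∑_{s≥0} (C^s_{ij}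 C^r_{ks} − C^s_{ik} C^r_{js}) = 0 hold for all i, j, k, r ≥ 0 (all these sums having only finitely many nonzero terms). -/

import Mathlib

open Finset

set_option maxHeartbeats 3200000


private lemma sum_parity_split (f : ℕ → ℂ) (M : ℕ) :
    ∑ s ∈ range (2*M), f s = ∑ t ∈ range M, f (2*t) + ∑ t ∈ range M, f (2*t+1) := by
  induction M with
  | zero => simp
  | succ M ih =>
      have h2 : 2*(M+1) = (2*M + 1) + 1 := by ring
      rw [h2, Finset.sum_range_succ, Finset.sum_range_succ,
        Finset.sum_range_succ (fun t => f (2*t)), Finset.sum_range_succ (fun t => f (2*t+1)), ih]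
      ring

private lemma sum_delta_mul (g : ℕ → ℂ) (P N : ℕ) (hPN : P < N) :
    ∑ t ∈ range N, (if t = P then (1:ℂ) else 0) * g t = g P := by
  rw [Finset.sum_eq_single_of_mem P (Finset.mem_range.2 hPN)]
  · simp
  · intro t _ ht; simp [ht]

private lemma sum_shrink (F : ℕ → ℂ) (n N : ℕ) (hnN : n ≤ N) (hz : ∀ t, n ≤ t → F t = 0) :
    ∑ t ∈ range N, F t = ∑ t ∈ range n, F t := by
  refine (Finset.sum_subset (Finset.range_subset_range.2 hnN) (fun t ht htn => ?_)).symm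
  rw [Finset.mem_range] at ht htn
  exact hz t (by omega)

private lemma sum_hdelta1 (h : ℕ → ℤ → ℂ) (h0 : ∀ (m : ℕ) (k : ℤ), k < 0 → h m k = 0)
    (x A b l N : ℕ) (hA : A ≤ N) :
    ∑ t ∈ range N, h x ((A:ℤ) - t - 1) * (if l = t + b then (1:ℂ) else 0)
      = if b ≤ l then h x ((A:ℤ) + b - l - 1) else 0 := by
  by_cases hbl : b ≤ l
  · rw [if_pos hbl]
    by_cases hlN : l - b < N
    · rw [Finset.sum_eq_single_of_mem (l-b) (Finset.mem_range.2 hlN)]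
      · rw [if_pos (by omega), mul_one]
        congr 1; omega
      · intro t _ htne; rw [if_neg (by omega), mul_zero]
    · rw [Finset.sum_eq_zero, h0 x _ (by omega)]
      intro t ht
      rw [Finset.mem_range] at ht
      rw [if_neg (by omega), mul_zero]
  · rw [if_neg hbl, Finset.sum_eq_zero]
    intro t _; rw [if_neg (by omega), mul_zero]

private lemma sum_hdelta2 (h : ℕ → ℤ → ℂ) (h0 : ∀ (m : ℕ) (k : ℤ), k < 0 → h m k = 0)
    (x A b l N : ℕ) (hA : A < N) :
    ∑ u ∈ range N, h x ((A:ℤ) - u) * (if l = b + u then (1:ℂ) else 0)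
      = if b ≤ l then h x ((A:ℤ) + b - l) else 0 := by
  by_cases hbl : b ≤ l
  · rw [if_pos hbl]
    by_cases hlN : l - b < N
    · rw [Finset.sum_eq_single_of_mem (l-b) (Finset.mem_range.2 hlN)]
      · rw [if_pos (by omega), mul_one]
        congr 1; omega
      · intro t _ htne; rw [if_neg (by omega), mul_zero]
    · rw [Finset.sum_eq_zero, h0 x _ (by omega)]
      intro t ht
      rw [Finset.mem_range] at ht
      rw [if_neg (by omega), mul_zero]
  · rw [if_neg hbl, Finset.sum_eq_zero]
    intro t _; rw [if_neg (by omega), mul_zero]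

private lemma conv1 (h : ℕ → ℤ → ℂ) (h0 : ∀ (m : ℕ) (k : ℤ), k < 0 → h m k = 0)
    (m k n M : ℕ) (hnM : n ≤ M) :
    ∑ t ∈ range M, h m ((n:ℤ)-t-1) * h t (k:ℤ)
      = ∑ s ∈ range n, h m (s:ℤ) * h (n-s-1) (k:ℤ) := by
  rw [sum_shrink _ n M hnM (fun t ht => by rw [h0 m _ (by omega), zero_mul])]
  rw [← Finset.sum_range_reflect (fun s => h m (s:ℤ) * h (n-s-1) (k:ℤ)) n]
  refine Finset.sum_congr rfl fun t ht => ?_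
  rw [Finset.mem_range] at ht
  have h1 : ((n-1-t : ℕ):ℤ) = (n:ℤ)-t-1 := by omega
  have h2 : n-(n-1-t)-1 = t := by omega
  rw [h1, h2]

private lemma conv2 (h : ℕ → ℤ → ℂ) (h0 : ∀ (m : ℕ) (k : ℤ), k < 0 → h m k = 0)
    (m n k M : ℕ) (hkM : k ≤ M) :
    ∑ t ∈ range M, h n ((k:ℤ)-t-1) * h m (t:ℤ)
      = ∑ s ∈ range k, h m (s:ℤ) * h n ((k:ℤ)-s-1) := by
  rw [sum_shrink _ k M hkM (fun t ht => by rw [h0 n _ (by omega), zero_mul])]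
  exact Finset.sum_congr rfl fun t _ => mul_comm _ _

private lemma lemA (h : ℕ → ℤ → ℂ) (h0 : ∀ (m : ℕ) (k : ℤ), k < 0 → h m k = 0)
    (hR1 : ∀ m k n : ℕ, 1 ≤ n →
      h m ((k:ℤ)+n) - h (m+n) (k:ℤ) - ∑ s ∈ range n, h m (s:ℤ) * h (n-s-1) (k:ℤ) = 0)
    (x y N : ℕ) (X : ℤ) (hyN : y ≤ N) :
    h (x+y) X + ∑ t ∈ range N, h x ((y:ℤ)-t-1) * h t X
      = if 0 ≤ X then h x ((y:ℤ)+X) else 0 := by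
  by_cases hX : 0 ≤ X
  · rw [if_pos hX]
    lift X to ℕ using hX
    rw [conv1 h h0 x X y N hyN]
    rcases Nat.eq_zero_or_pos y with hy | hy
    · subst hy; simp
    · have h1 := hR1 x X y hy
      have h2 : (X:ℤ)+y = (y:ℤ)+X := by ring
      rw [h2] at h1
      linear_combination -h1
  · rw [if_neg hX, h0 _ _ (lt_of_not_ge hX), Finset.sum_eq_zero, add_zero]
    intro t _; rw [h0 t _ (lt_of_not_ge hX), mul_zero]

private lemma lemB2 (h : ℕ → ℤ → ℂ) (h0 : ∀ (m : ℕ) (k : ℤ), k < 0 → h m k = 0)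
    (hR2 : ∀ m n k : ℕ, 1 ≤ k →
      h m ((k:ℤ)+n) + h n ((k:ℤ)+m) + ∑ l ∈ range k, h m (l:ℤ) * h n ((k:ℤ)-l-1) = 0)
    (x y z l N : ℕ) (hyN : y < N) :
    ∑ u ∈ range N, h x ((y:ℤ)-u) * h z ((u:ℤ)-l-1)
      = if y ≤ l then 0 else -(h z ((x:ℤ)+y-l) + h x ((z:ℤ)+y-l)) := by
  by_cases hyl : y ≤ l
  · rw [if_pos hyl, Finset.sum_eq_zero]
    intro u _
    by_cases hu : (u:ℤ) - l - 1 < 0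
    · rw [h0 z _ hu, mul_zero]
    · rw [h0 x _ (by omega), zero_mul]
  · rw [if_neg hyl]
    push_neg at hyl
    set k := y - l with hk
    have hk1 : 1 ≤ k := by omega
    rw [sum_shrink _ (y+1) N (by omega) (fun u hu => by rw [h0 x _ (by omega), zero_mul])]
    rw [Finset.range_eq_Ico,
      ← Finset.sum_Ico_consecutive _ (Nat.zero_le (l+1)) (by omega : l+1 ≤ y+1)]
    have hzero : ∑ u ∈ Finset.Ico 0 (l+1), h x ((y:ℤ)-u) * h z ((u:ℤ)-l-1) = 0 := by
      refine Finset.sum_eq_zero fun u hu => ?_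
      rw [Finset.mem_Ico] at hu
      rw [h0 z _ (by omega), mul_zero]
    rw [hzero, zero_add, Finset.sum_Ico_eq_sum_range]
    have hcount : (y+1)-(l+1) = k := by omega
    rw [hcount]
    have h1 := hR2 z x k hk1
    have hs : ∑ i ∈ range k, h x ((y:ℤ)-(l+1+i)) * h z (((l+1+i:ℕ):ℤ)-l-1)
        = ∑ i ∈ range k, h z (i:ℤ) * h x ((k:ℤ)-i-1) := by
      refine Finset.sum_congr rfl fun i hi => ?_
      rw [Finset.mem_range] at hi
      have e1 : (y:ℤ)-(l+1+i) = (k:ℤ)-i-1 := by omega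
      have e2 : ((l+1+i:ℕ):ℤ)-l-1 = (i:ℤ) := by omega
      rw [e1, e2, mul_comm]
    have e3 : (x:ℤ)+y-l = (k:ℤ)+x := by omega
    have e4 : (z:ℤ)+y-l = (k:ℤ)+z := by omega
    rw [e3, e4]
    have hs' : ∑ i ∈ range k, h x ((y:ℤ)-↑(l+1+i)) * h z (↑(l+1+i)-l-1)
        = ∑ i ∈ range k, h z (i:ℤ) * h x ((k:ℤ)-i-1) := hs
    rw [hs']
    linear_combination h1

private lemma lemB (h : ℕ → ℤ → ℂ) (h0 : ∀ (m : ℕ) (k : ℤ), k < 0 → h m k = 0)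
    (hR2 : ∀ m n k : ℕ, 1 ≤ k →
      h m ((k:ℤ)+n) + h n ((k:ℤ)+m) + ∑ l ∈ range k, h m (l:ℤ) * h n ((k:ℤ)-l-1) = 0)
    (x y z l N : ℕ) (hyN : y ≤ N) :
    ∑ t ∈ range N, h x ((y:ℤ)-t-1) * h z ((t:ℤ)-l)
      = if y ≤ l then 0 else -(h z ((x:ℤ)+y-l) + h x ((z:ℤ)+y-l)) := by
  have h2 := lemB2 h h0 hR2 x y z l (N+1) (by omega)
  rw [Finset.sum_range_succ'] at h2
  rw [h0 z (((0:ℕ):ℤ)-l-1) (by omega), mul_zero, add_zero] at h2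
  rw [← h2]
  refine Finset.sum_congr rfl fun t _ => ?_
  have e1 : (y:ℤ)-↑(t+1) = (y:ℤ)-t-1 := by omega
  have e2 : (↑(t+1):ℤ)-l-1 = (t:ℤ)-l := by omega
  rw [e1, e2]

private lemma P1 (h : ℕ → ℤ → ℂ) (h0 : ∀ (m : ℕ) (k : ℤ), k < 0 → h m k = 0) (x y c l M : ℕ) (hM : x+y+c+l+2 ≤ M) :
    ∑ t ∈ range M, (if t = x + y then (1:ℂ) else 0) * (if l = c + t then (1:ℂ) else 0)
      = if l = x+y+c then (1:ℂ) else 0 := by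
  rw [sum_delta_mul _ (x+y) M (by omega)]
  exact if_congr (by omega) rfl rfl

private lemma P4 (h : ℕ → ℤ → ℂ) (h0 : ∀ (m : ℕ) (k : ℤ), k < 0 → h m k = 0) (x y c l M : ℕ) (hM : x+y+c+l+2 ≤ M) :
    ∑ t ∈ range M, (if t = x + y then (1:ℂ) else 0)
        * ((if l = c + t then (1:ℂ) else 0) + h c ((t:ℤ)-l-1))
      = (if l = x+y+c then (1:ℂ) else 0) + h c ((x:ℤ)+y-l-1) := by
  rw [sum_delta_mul _ (x+y) M (by omega),
    show (if l = c + (x+y) then (1:ℂ) else 0) = (if l = x+y+c then (1:ℂ) else 0) from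
      if_congr (by omega) rfl rfl,
    show ((((x+y:ℕ)):ℤ)-l-1) = (x:ℤ)+y-l-1 from by omega]

private lemma P2 (h : ℕ → ℤ → ℂ) (h0 : ∀ (m : ℕ) (k : ℤ), k < 0 → h m k = 0) (x y c l M : ℕ) (hM : x+y+c+l+2 ≤ M) :
    ∑ t ∈ range M, ((if t = y + x then (1:ℂ) else 0) + h y ((x:ℤ)-t-1))
        * ((if l = t + c then (1:ℂ) else 0) + h t ((c:ℤ)-l-1))
      = (if l = x+y+c then (1:ℂ) else 0) + h (y+x) ((c:ℤ)-l-1)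
        + (if c ≤ l then h y ((x:ℤ)+c-l-1) else 0)
        + ∑ t ∈ range M, h y ((x:ℤ)-t-1) * h t ((c:ℤ)-l-1) := by
  have expand : ∀ t ∈ range M,
      ((if t = y + x then (1:ℂ) else 0) + h y ((x:ℤ)-t-1))
        * ((if l = t + c then (1:ℂ) else 0) + h t ((c:ℤ)-l-1))
      = (if t = y + x then (1:ℂ) else 0) * ((if l = t + c then (1:ℂ) else 0) + h t ((c:ℤ)-l-1))
        + h y ((x:ℤ)-t-1) * (if l = t + c then (1:ℂ) else 0)
        + h y ((x:ℤ)-t-1) * h t ((c:ℤ)-l-1) := fun t _ => by ring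
  rw [Finset.sum_congr rfl expand, Finset.sum_add_distrib, Finset.sum_add_distrib,
    sum_delta_mul _ (y+x) M (by omega), sum_hdelta1 h h0 y x c l M (by omega),
    show (if l = y + x + c then (1:ℂ) else 0) = (if l = x+y+c then (1:ℂ) else 0) from
      if_congr (by omega) rfl rfl]

private lemma P3 (h : ℕ → ℤ → ℂ) (h0 : ∀ (m : ℕ) (k : ℤ), k < 0 → h m k = 0) (x y c l M : ℕ) (hM : x+y+c+l+2 ≤ M) :
    ∑ t ∈ range M, ((if t = y + x then (1:ℂ) else 0) + h y ((x:ℤ)-t-1))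
        * ((if l = t + (c+1) then (1:ℂ) else 0) + h c ((t:ℤ)-l) + h t ((c:ℤ)-l))
      = (if l = x+y+c+1 then (1:ℂ) else 0) + h c ((x:ℤ)+y-l) + h (y+x) ((c:ℤ)-l)
        + (if c+1 ≤ l then h y ((x:ℤ)+c-l) else 0)
        + ∑ t ∈ range M, h y ((x:ℤ)-t-1) * h c ((t:ℤ)-l)
        + ∑ t ∈ range M, h y ((x:ℤ)-t-1) * h t ((c:ℤ)-l) := by
  have expand : ∀ t ∈ range M,
      ((if t = y + x then (1:ℂ) else 0) + h y ((x:ℤ)-t-1))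
        * ((if l = t + (c+1) then (1:ℂ) else 0) + h c ((t:ℤ)-l) + h t ((c:ℤ)-l))
      = (if t = y + x then (1:ℂ) else 0)
          * ((if l = t + (c+1) then (1:ℂ) else 0) + h c ((t:ℤ)-l) + h t ((c:ℤ)-l))
        + h y ((x:ℤ)-t-1) * (if l = t + (c+1) then (1:ℂ) else 0)
        + h y ((x:ℤ)-t-1) * h c ((t:ℤ)-l)
        + h y ((x:ℤ)-t-1) * h t ((c:ℤ)-l) := fun t _ => by ring
  rw [Finset.sum_congr rfl expand, Finset.sum_add_distrib, Finset.sum_add_distrib,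
    Finset.sum_add_distrib, sum_delta_mul _ (y+x) M (by omega),
    sum_hdelta1 h h0 y x (c+1) l M (by omega)]
  rw [show (if l = y + x + (c+1) then (1:ℂ) else 0) = (if l = x+y+c+1 then (1:ℂ) else 0) from
      if_congr (by omega) rfl rfl,
    show (((y+x:ℕ):ℤ) - l) = (x:ℤ)+y-l from by omega,
    show ((x:ℤ) + ((c+1:ℕ):ℤ) - l - 1) = (x:ℤ)+c-l from by omega]

private lemma P5 (h : ℕ → ℤ → ℂ) (h0 : ∀ (m : ℕ) (k : ℤ), k < 0 → h m k = 0) (x y c l M : ℕ) (hM : x+y+c+l+2 ≤ M) :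
    ∑ u ∈ range M, ((if u = x+y+1 then (1:ℂ) else 0) + h x ((y:ℤ)-u) + h y ((x:ℤ)-u))
        * (if l = c + u then (1:ℂ) else 0)
      = (if l = x+y+c+1 then (1:ℂ) else 0)
        + (if c ≤ l then h x ((y:ℤ)+c-l) + h y ((x:ℤ)+c-l) else 0) := by
  have expand : ∀ u ∈ range M,
      ((if u = x+y+1 then (1:ℂ) else 0) + h x ((y:ℤ)-u) + h y ((x:ℤ)-u))
        * (if l = c + u then (1:ℂ) else 0)
      = (if u = x+y+1 then (1:ℂ) else 0) * (if l = c + u then (1:ℂ) else 0)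
        + h x ((y:ℤ)-u) * (if l = c + u then (1:ℂ) else 0)
        + h y ((x:ℤ)-u) * (if l = c + u then (1:ℂ) else 0) := fun u _ => by ring
  rw [Finset.sum_congr rfl expand, Finset.sum_add_distrib, Finset.sum_add_distrib,
    sum_delta_mul _ (x+y+1) M (by omega), sum_hdelta2 h h0 x y c l M (by omega),
    sum_hdelta2 h h0 y x c l M (by omega),
    show (if l = c + (x+y+1) then (1:ℂ) else 0) = (if l = x+y+c+1 then (1:ℂ) else 0) from
      if_congr (by omega) rfl rfl]
  by_cases hcl : c ≤ l
  · simp only [if_pos hcl]; ring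
  · simp only [if_neg hcl]; ring

private lemma P6 (h : ℕ → ℤ → ℂ) (h0 : ∀ (m : ℕ) (k : ℤ), k < 0 → h m k = 0) (x y c l M : ℕ) (hM : x+y+c+l+2 ≤ M) :
    ∑ u ∈ range M, ((if u = x+y+1 then (1:ℂ) else 0) + h x ((y:ℤ)-u) + h y ((x:ℤ)-u))
        * ((if l = c + u then (1:ℂ) else 0) + h c ((u:ℤ)-l-1))
      = (if l = x+y+c+1 then (1:ℂ) else 0) + h c ((x:ℤ)+y-l)
        + (if c ≤ l then h x ((y:ℤ)+c-l) + h y ((x:ℤ)+c-l) else 0)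
        + ∑ u ∈ range M, h x ((y:ℤ)-u) * h c ((u:ℤ)-l-1)
        + ∑ u ∈ range M, h y ((x:ℤ)-u) * h c ((u:ℤ)-l-1) := by
  have expand : ∀ u ∈ range M,
      ((if u = x+y+1 then (1:ℂ) else 0) + h x ((y:ℤ)-u) + h y ((x:ℤ)-u))
        * ((if l = c + u then (1:ℂ) else 0) + h c ((u:ℤ)-l-1))
      = (if u = x+y+1 then (1:ℂ) else 0) * ((if l = c + u then (1:ℂ) else 0) + h c ((u:ℤ)-l-1))
        + h x ((y:ℤ)-u) * (if l = c + u then (1:ℂ) else 0)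
        + h y ((x:ℤ)-u) * (if l = c + u then (1:ℂ) else 0)
        + h x ((y:ℤ)-u) * h c ((u:ℤ)-l-1)
        + h y ((x:ℤ)-u) * h c ((u:ℤ)-l-1) := fun u _ => by ring
  rw [Finset.sum_congr rfl expand, Finset.sum_add_distrib, Finset.sum_add_distrib,
    Finset.sum_add_distrib, Finset.sum_add_distrib,
    sum_delta_mul _ (x+y+1) M (by omega), sum_hdelta2 h h0 x y c l M (by omega),
    sum_hdelta2 h h0 y x c l M (by omega),
    show (if l = c + (x+y+1) then (1:ℂ) else 0) = (if l = x+y+c+1 then (1:ℂ) else 0) from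
      if_congr (by omega) rfl rfl,
    show (((x+y+1:ℕ):ℤ) - l - 1) = (x:ℤ)+y-l from by omega]
  by_cases hcl : c ≤ l
  · simp only [if_pos hcl]; ring
  · simp only [if_neg hcl]; ring


/-- The quadratic relations on the parameters `H^{2m+1}_{2k+1}` are equivalent to the
associativity of the multiplication defined by the structure constants `C^l_{jk}`.
Here `H : ℕ → ℤ → ℂ` records `H^a_b`, extended by zero whenever `b ≤ 0` or `b` is even,
and `C r j k` denotes `C^r_{jk}`.  The (a priori infinite) associativity sums have
finitely many nonzero terms and are expressed via `finsum`. -/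
theorem quadratic_relations_iff_associativity
    (H : ℕ → ℤ → ℂ)
    (hH0 : ∀ (a : ℕ) (b : ℤ), (b ≤ 0 ∨ Even b) → H a b = 0)
    (C : ℕ → ℕ → ℕ → ℂ)
    (hC1 : ∀ l n m : ℕ, C (2*l) (2*n) (2*m) = if l = n + m then 1 else 0)
    (hC2 : ∀ l n m : ℕ, C (2*l+1) (2*n) (2*m) = 0)
    (hC3 : ∀ l n m : ℕ, C (2*l+1) (2*n) (2*m+1)
            = (if l = m + n then 1 else 0) + H (2*m+1) (2*((n:ℤ) - l) - 1))
    (hC4 : ∀ l n m : ℕ, C (2*l+1) (2*m+1) (2*n)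
            = (if l = m + n then 1 else 0) + H (2*m+1) (2*((n:ℤ) - l) - 1))
    (hC5 : ∀ l n m : ℕ, C (2*l) (2*n) (2*m+1) = 0)
    (hC6 : ∀ l n m : ℕ, C (2*l) (2*m+1) (2*n) = 0)
    (hC7 : ∀ l n m : ℕ, C (2*l) (2*n+1) (2*m+1)
            = (if l = m + n + 1 then 1 else 0)
              + H (2*n+1) (2*((m:ℤ) - l) + 1) + H (2*m+1) (2*((n:ℤ) - l) + 1))
    (hC8 : ∀ l n m : ℕ, C (2*l+1) (2*n+1) (2*m+1) = 0) :
    ((∀ m k n : ℕ, 1 ≤ n →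
        H (2*m+1) (2*((k:ℤ) + n) + 1) - H (2*(m+n)+1) (2*(k:ℤ) + 1)
          - ∑ s ∈ range n, H (2*m+1) (2*(s:ℤ)+1) * H (2*(n-s)-1) (2*(k:ℤ)+1) = 0) ∧
     (∀ m n k : ℕ, 1 ≤ k →
        H (2*m+1) (2*((k:ℤ) + n) + 1) + H (2*n+1) (2*((k:ℤ) + m) + 1)
          + ∑ l ∈ range k, H (2*m+1) (2*(l:ℤ)+1) * H (2*n+1) (2*((k:ℤ)-l)-1) = 0))
    ↔ (∀ i j k r : ℕ, ∑ᶠ s : ℕ, (C s i j * C r k s - C s i k * C r j s) = 0) := by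
  set h : ℕ → ℤ → ℂ := fun m k => H (2*m+1) (2*k+1) with hh
  have h0 : ∀ (m : ℕ) (k : ℤ), k < 0 → h m k = 0 := fun m k hk => hH0 _ _ (Or.inl (by omega))
  have hHeq : ∀ (a : ℕ) (X : ℤ), H a (2*X-1) = H a (2*(X-1)+1) := fun a X => by congr 1; ring
  -- translations of the structure constants
  have hL_ee : ∀ x y t : ℕ, C (2*t) (2*x) (2*y) = (if t = x + y then (1:ℂ) else 0) :=
    fun x y t => hC1 t x y
  have hL_eo : ∀ x y t : ℕ, C (2*t+1) (2*x) (2*y+1)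
      = (if t = y + x then (1:ℂ) else 0) + h y ((x:ℤ)-t-1) := by
    intro x y t; rw [hC3 t x y, hHeq]
  have hL_oe : ∀ x y t : ℕ, C (2*t+1) (2*x+1) (2*y)
      = (if t = x + y then (1:ℂ) else 0) + h x ((y:ℤ)-t-1) := by
    intro x y t; rw [hC4 t y x, hHeq]
  have hL_oo : ∀ x y u : ℕ, C (2*u) (2*x+1) (2*y+1)
      = (if u = x+y+1 then (1:ℂ) else 0) + h x ((y:ℤ)-u) + h y ((x:ℤ)-u) := by
    intro x y u
    rw [hC7 u x y, show (if u = y+x+1 then (1:ℂ) else 0) = (if u = x+y+1 then (1:ℂ) else 0) from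
      if_congr (by omega) rfl rfl]
  have hR_ee : ∀ l c t : ℕ, C (2*l) (2*c) (2*t) = (if l = c + t then (1:ℂ) else 0) :=
    fun l c t => hC1 l c t
  have hR_oe : ∀ l c t : ℕ, C (2*l+1) (2*c) (2*t+1)
      = (if l = t + c then (1:ℂ) else 0) + h t ((c:ℤ)-l-1) := by
    intro l c t; rw [hC3 l c t, hHeq]
  have hR_oo : ∀ l c t : ℕ, C (2*l+1) (2*c+1) (2*t)
      = (if l = c + t then (1:ℂ) else 0) + h c ((t:ℤ)-l-1) := by
    intro l c t; rw [hC4 l t c, hHeq]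
  have hR_eo : ∀ l c t : ℕ, C (2*l) (2*c+1) (2*t+1)
      = (if l = t + (c+1) then (1:ℂ) else 0) + h c ((t:ℤ)-l) + h t ((c:ℤ)-l) := by
    intro l c t
    rw [hC7 l c t, show (if l = t+c+1 then (1:ℂ) else 0) = (if l = t+(c+1) then (1:ℂ) else 0) from
      if_congr (by omega) rfl rfl]
  -- support bound
  have boundC : ∀ s i j : ℕ, i + j < s → C s i j = 0 := by
    intro s i j hij
    rcases Nat.even_or_odd' s with ⟨l, rfl | rfl⟩ <;> rcases Nat.even_or_odd' i with ⟨n, rfl | rfl⟩ <;>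
      rcases Nat.even_or_odd' j with ⟨m, rfl | rfl⟩
    · rw [hC1, if_neg (by omega)]
    · rw [hC5]
    · rw [hC6]
    · rw [hC7, if_neg (by omega), hH0 _ _ (Or.inl (by omega)), hH0 _ _ (Or.inl (by omega))]
      norm_num
    · rw [hC2]
    · rw [hC3, if_neg (by omega), hH0 _ _ (Or.inl (by omega))]; norm_num
    · rw [hC4, if_neg (by omega), hH0 _ _ (Or.inl (by omega))]; norm_num
    · rw [hC8]
  have hparC : ∀ s i j : ℕ, ¬ (s % 2 = (i+j) % 2) → C s i j = 0 := by
    intro s i j hp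
    rcases Nat.even_or_odd' s with ⟨l, rfl | rfl⟩ <;> rcases Nat.even_or_odd' i with ⟨n, rfl | rfl⟩ <;>
      rcases Nat.even_or_odd' j with ⟨m, rfl | rfl⟩
    · exact absurd (by omega) hp
    · rw [hC5]
    · rw [hC6]
    · exact absurd (by omega) hp
    · rw [hC2]
    · exact absurd (by omega) hp
    · exact absurd (by omega) hp
    · rw [hC8]
  have hker : ∀ i j k r : ℕ, (i+j+k+r) % 2 = 1 → ∀ s, C s i j * C r k s = 0 := by
    intro i j k r hp s
    by_cases hs : s % 2 = (i+j) % 2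
    · rw [hparC r k s (by omega), mul_zero]
    · rw [hparC s i j hs, zero_mul]
  have hsub : ∀ i j k r M : ℕ, i+j+2 ≤ 2*M → i+k+2 ≤ 2*M →
      ∑ᶠ s : ℕ, (C s i j * C r k s - C s i k * C r j s)
        = ∑ s ∈ range (2*M), C s i j * C r k s - ∑ s ∈ range (2*M), C s i k * C r j s := by
    intro i j k r M h1 h2
    rw [← Finset.sum_sub_distrib]
    refine finsum_eq_finset_sum_of_support_subset _ ?_
    intro s hs
    rw [Function.mem_support] at hs
    rw [Finset.mem_coe, Finset.mem_range]
    by_contra hsn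
    push_neg at hsn
    exact hs (by rw [boundC s i j (by omega), boundC s i k (by omega), zero_mul, zero_mul,
      sub_zero])
  -- reductions of the associativity sums, one per parity configuration
  have red_eee : ∀ a b c l : ℕ,
      ∑ᶠ s : ℕ, (C s (2*a) (2*b) * C (2*l) (2*c) s - C s (2*a) (2*c) * C (2*l) (2*b) s)
      = (if l = a+b+c then (1:ℂ) else 0) - (if l = a+c+b then (1:ℂ) else 0) := by
    intro a b c l
    rw [hsub (2*a) (2*b) (2*c) (2*l) (a+b+c+l+2) (by omega) (by omega)]
    congr 1
    · rw [sum_parity_split (fun s => C s (2*a) (2*b) * C (2*l) (2*c) s) (a+b+c+l+2)]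
      have hz : ∑ t ∈ range (a+b+c+l+2), C (2*t+1) (2*a) (2*b) * C (2*l) (2*c) (2*t+1) = 0 :=
        Finset.sum_eq_zero fun t _ => by rw [hC2 t a b, zero_mul]
      rw [hz, add_zero, Finset.sum_congr rfl (fun t _ => by rw [hL_ee, hR_ee])]
      exact P1 h h0 a b c l (a+b+c+l+2) (by omega)
    · rw [sum_parity_split (fun s => C s (2*a) (2*c) * C (2*l) (2*b) s) (a+b+c+l+2)]
      have hz : ∑ t ∈ range (a+b+c+l+2), C (2*t+1) (2*a) (2*c) * C (2*l) (2*b) (2*t+1) = 0 :=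
        Finset.sum_eq_zero fun t _ => by rw [hC2 t a c, zero_mul]
      rw [hz, add_zero, Finset.sum_congr rfl (fun t _ => by rw [hL_ee, hR_ee])]
      exact P1 h h0 a c b l (a+b+c+l+2) (by omega)
  have red_eeo : ∀ a b c l : ℕ,
      ∑ᶠ s : ℕ, (C s (2*a) (2*b) * C (2*l+1) (2*c+1) s - C s (2*a) (2*c+1) * C (2*l+1) (2*b) s)
      = ((if l = a+b+c then (1:ℂ) else 0) + h c ((a:ℤ)+b-l-1))
        - ((if l = a+c+b then (1:ℂ) else 0) + h (c+a) ((b:ℤ)-l-1)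
           + (if b ≤ l then h c ((a:ℤ)+b-l-1) else 0)
           + ∑ t ∈ range (a+b+c+l+2), h c ((a:ℤ)-t-1) * h t ((b:ℤ)-l-1)) := by
    intro a b c l
    rw [hsub (2*a) (2*b) (2*c+1) (2*l+1) (a+b+c+l+2) (by omega) (by omega)]
    congr 1
    · rw [sum_parity_split (fun s => C s (2*a) (2*b) * C (2*l+1) (2*c+1) s) (a+b+c+l+2)]
      have hz : ∑ t ∈ range (a+b+c+l+2), C (2*t+1) (2*a) (2*b) * C (2*l+1) (2*c+1) (2*t+1) = 0 :=
        Finset.sum_eq_zero fun t _ => by rw [hC2 t a b, zero_mul]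
      rw [hz, add_zero, Finset.sum_congr rfl (fun t _ => by rw [hL_ee, hR_oo])]
      exact P4 h h0 a b c l (a+b+c+l+2) (by omega)
    · rw [sum_parity_split (fun s => C s (2*a) (2*c+1) * C (2*l+1) (2*b) s) (a+b+c+l+2)]
      have hz : ∑ t ∈ range (a+b+c+l+2), C (2*t) (2*a) (2*c+1) * C (2*l+1) (2*b) (2*t) = 0 :=
        Finset.sum_eq_zero fun t _ => by rw [hC5 t a c, zero_mul]
      rw [hz, zero_add, Finset.sum_congr rfl (fun t _ => by rw [hL_eo, hR_oe])]
      exact P2 h h0 a c b l (a+b+c+l+2) (by omega)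
  have red_eoe : ∀ a b c l : ℕ,
      ∑ᶠ s : ℕ, (C s (2*a) (2*b+1) * C (2*l+1) (2*c) s - C s (2*a) (2*c) * C (2*l+1) (2*b+1) s)
      = ((if l = a+b+c then (1:ℂ) else 0) + h (b+a) ((c:ℤ)-l-1)
         + (if c ≤ l then h b ((a:ℤ)+c-l-1) else 0)
         + ∑ t ∈ range (a+b+c+l+2), h b ((a:ℤ)-t-1) * h t ((c:ℤ)-l-1))
        - ((if l = a+c+b then (1:ℂ) else 0) + h b ((a:ℤ)+c-l-1)) := by
    intro a b c l
    rw [hsub (2*a) (2*b+1) (2*c) (2*l+1) (a+b+c+l+2) (by omega) (by omega)]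
    congr 1
    · rw [sum_parity_split (fun s => C s (2*a) (2*b+1) * C (2*l+1) (2*c) s) (a+b+c+l+2)]
      have hz : ∑ t ∈ range (a+b+c+l+2), C (2*t) (2*a) (2*b+1) * C (2*l+1) (2*c) (2*t) = 0 :=
        Finset.sum_eq_zero fun t _ => by rw [hC5 t a b, zero_mul]
      rw [hz, zero_add, Finset.sum_congr rfl (fun t _ => by rw [hL_eo, hR_oe])]
      exact P2 h h0 a b c l (a+b+c+l+2) (by omega)
    · rw [sum_parity_split (fun s => C s (2*a) (2*c) * C (2*l+1) (2*b+1) s) (a+b+c+l+2)]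
      have hz : ∑ t ∈ range (a+b+c+l+2), C (2*t+1) (2*a) (2*c) * C (2*l+1) (2*b+1) (2*t+1) = 0 :=
        Finset.sum_eq_zero fun t _ => by rw [hC2 t a c, zero_mul]
      rw [hz, add_zero, Finset.sum_congr rfl (fun t _ => by rw [hL_ee, hR_oo])]
      exact P4 h h0 a c b l (a+b+c+l+2) (by omega)
  have red_oee : ∀ a b c l : ℕ,
      ∑ᶠ s : ℕ, (C s (2*a+1) (2*b) * C (2*l+1) (2*c) s - C s (2*a+1) (2*c) * C (2*l+1) (2*b) s)
      = ((if l = b+a+c then (1:ℂ) else 0) + h (a+b) ((c:ℤ)-l-1)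
         + (if c ≤ l then h a ((b:ℤ)+c-l-1) else 0)
         + ∑ t ∈ range (a+b+c+l+2), h a ((b:ℤ)-t-1) * h t ((c:ℤ)-l-1))
        - ((if l = c+a+b then (1:ℂ) else 0) + h (a+c) ((b:ℤ)-l-1)
           + (if b ≤ l then h a ((c:ℤ)+b-l-1) else 0)
           + ∑ t ∈ range (a+b+c+l+2), h a ((c:ℤ)-t-1) * h t ((b:ℤ)-l-1)) := by
    intro a b c l
    rw [hsub (2*a+1) (2*b) (2*c) (2*l+1) (a+b+c+l+2) (by omega) (by omega)]
    congr 1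
    · rw [sum_parity_split (fun s => C s (2*a+1) (2*b) * C (2*l+1) (2*c) s) (a+b+c+l+2)]
      have hz : ∑ t ∈ range (a+b+c+l+2), C (2*t) (2*a+1) (2*b) * C (2*l+1) (2*c) (2*t) = 0 :=
        Finset.sum_eq_zero fun t _ => by rw [hC6 t b a, zero_mul]
      rw [hz, zero_add, Finset.sum_congr rfl (fun t _ => by rw [hL_oe, hR_oe])]
      exact P2 h h0 b a c l (a+b+c+l+2) (by omega)
    · rw [sum_parity_split (fun s => C s (2*a+1) (2*c) * C (2*l+1) (2*b) s) (a+b+c+l+2)]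
      have hz : ∑ t ∈ range (a+b+c+l+2), C (2*t) (2*a+1) (2*c) * C (2*l+1) (2*b) (2*t) = 0 :=
        Finset.sum_eq_zero fun t _ => by rw [hC6 t c a, zero_mul]
      rw [hz, zero_add, Finset.sum_congr rfl (fun t _ => by rw [hL_oe, hR_oe])]
      exact P2 h h0 c a b l (a+b+c+l+2) (by omega)
  have red_eoo : ∀ a b c l : ℕ,
      ∑ᶠ s : ℕ, (C s (2*a) (2*b+1) * C (2*l) (2*c+1) s - C s (2*a) (2*c+1) * C (2*l) (2*b+1) s)
      = ((if l = a+b+c+1 then (1:ℂ) else 0) + h c ((a:ℤ)+b-l) + h (b+a) ((c:ℤ)-l)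
         + (if c+1 ≤ l then h b ((a:ℤ)+c-l) else 0)
         + ∑ t ∈ range (a+b+c+l+2), h b ((a:ℤ)-t-1) * h c ((t:ℤ)-l)
         + ∑ t ∈ range (a+b+c+l+2), h b ((a:ℤ)-t-1) * h t ((c:ℤ)-l))
        - ((if l = a+c+b+1 then (1:ℂ) else 0) + h b ((a:ℤ)+c-l) + h (c+a) ((b:ℤ)-l)
           + (if b+1 ≤ l then h c ((a:ℤ)+b-l) else 0)
           + ∑ t ∈ range (a+b+c+l+2), h c ((a:ℤ)-t-1) * h b ((t:ℤ)-l)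
           + ∑ t ∈ range (a+b+c+l+2), h c ((a:ℤ)-t-1) * h t ((b:ℤ)-l)) := by
    intro a b c l
    rw [hsub (2*a) (2*b+1) (2*c+1) (2*l) (a+b+c+l+2) (by omega) (by omega)]
    congr 1
    · rw [sum_parity_split (fun s => C s (2*a) (2*b+1) * C (2*l) (2*c+1) s) (a+b+c+l+2)]
      have hz : ∑ t ∈ range (a+b+c+l+2), C (2*t) (2*a) (2*b+1) * C (2*l) (2*c+1) (2*t) = 0 :=
        Finset.sum_eq_zero fun t _ => by rw [hC5 t a b, zero_mul]
      rw [hz, zero_add, Finset.sum_congr rfl (fun t _ => by rw [hL_eo, hR_eo])]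
      exact P3 h h0 a b c l (a+b+c+l+2) (by omega)
    · rw [sum_parity_split (fun s => C s (2*a) (2*c+1) * C (2*l) (2*b+1) s) (a+b+c+l+2)]
      have hz : ∑ t ∈ range (a+b+c+l+2), C (2*t) (2*a) (2*c+1) * C (2*l) (2*b+1) (2*t) = 0 :=
        Finset.sum_eq_zero fun t _ => by rw [hC5 t a c, zero_mul]
      rw [hz, zero_add, Finset.sum_congr rfl (fun t _ => by rw [hL_eo, hR_eo])]
      exact P3 h h0 a c b l (a+b+c+l+2) (by omega)
  have red_oeo : ∀ a b c l : ℕ,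
      ∑ᶠ s : ℕ, (C s (2*a+1) (2*b) * C (2*l) (2*c+1) s - C s (2*a+1) (2*c+1) * C (2*l) (2*b) s)
      = ((if l = b+a+c+1 then (1:ℂ) else 0) + h c ((b:ℤ)+a-l) + h (a+b) ((c:ℤ)-l)
         + (if c+1 ≤ l then h a ((b:ℤ)+c-l) else 0)
         + ∑ t ∈ range (a+b+c+l+2), h a ((b:ℤ)-t-1) * h c ((t:ℤ)-l)
         + ∑ t ∈ range (a+b+c+l+2), h a ((b:ℤ)-t-1) * h t ((c:ℤ)-l))
        - ((if l = a+c+b+1 then (1:ℂ) else 0)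
           + (if b ≤ l then h a ((c:ℤ)+b-l) + h c ((a:ℤ)+b-l) else 0)) := by
    intro a b c l
    rw [hsub (2*a+1) (2*b) (2*c+1) (2*l) (a+b+c+l+2) (by omega) (by omega)]
    congr 1
    · rw [sum_parity_split (fun s => C s (2*a+1) (2*b) * C (2*l) (2*c+1) s) (a+b+c+l+2)]
      have hz : ∑ t ∈ range (a+b+c+l+2), C (2*t) (2*a+1) (2*b) * C (2*l) (2*c+1) (2*t) = 0 :=
        Finset.sum_eq_zero fun t _ => by rw [hC6 t b a, zero_mul]
      rw [hz, zero_add, Finset.sum_congr rfl (fun t _ => by rw [hL_oe, hR_eo])]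
      exact P3 h h0 b a c l (a+b+c+l+2) (by omega)
    · rw [sum_parity_split (fun s => C s (2*a+1) (2*c+1) * C (2*l) (2*b) s) (a+b+c+l+2)]
      have hz : ∑ t ∈ range (a+b+c+l+2), C (2*t+1) (2*a+1) (2*c+1) * C (2*l) (2*b) (2*t+1) = 0 :=
        Finset.sum_eq_zero fun t _ => by rw [hC8 t a c, zero_mul]
      rw [hz, add_zero, Finset.sum_congr rfl (fun t _ => by rw [hL_oo, hR_ee])]
      exact P5 h h0 a c b l (a+b+c+l+2) (by omega)
  have red_ooe : ∀ a b c l : ℕ,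
      ∑ᶠ s : ℕ, (C s (2*a+1) (2*b+1) * C (2*l) (2*c) s - C s (2*a+1) (2*c) * C (2*l) (2*b+1) s)
      = ((if l = a+b+c+1 then (1:ℂ) else 0)
         + (if c ≤ l then h a ((b:ℤ)+c-l) + h b ((a:ℤ)+c-l) else 0))
        - ((if l = c+a+b+1 then (1:ℂ) else 0) + h b ((c:ℤ)+a-l) + h (a+c) ((b:ℤ)-l)
           + (if b+1 ≤ l then h a ((c:ℤ)+b-l) else 0)
           + ∑ t ∈ range (a+b+c+l+2), h a ((c:ℤ)-t-1) * h b ((t:ℤ)-l)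
           + ∑ t ∈ range (a+b+c+l+2), h a ((c:ℤ)-t-1) * h t ((b:ℤ)-l)) := by
    intro a b c l
    rw [hsub (2*a+1) (2*b+1) (2*c) (2*l) (a+b+c+l+2) (by omega) (by omega)]
    congr 1
    · rw [sum_parity_split (fun s => C s (2*a+1) (2*b+1) * C (2*l) (2*c) s) (a+b+c+l+2)]
      have hz : ∑ t ∈ range (a+b+c+l+2), C (2*t+1) (2*a+1) (2*b+1) * C (2*l) (2*c) (2*t+1) = 0 :=
        Finset.sum_eq_zero fun t _ => by rw [hC8 t a b, zero_mul]
      rw [hz, add_zero, Finset.sum_congr rfl (fun t _ => by rw [hL_oo, hR_ee])]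
      exact P5 h h0 a b c l (a+b+c+l+2) (by omega)
    · rw [sum_parity_split (fun s => C s (2*a+1) (2*c) * C (2*l) (2*b+1) s) (a+b+c+l+2)]
      have hz : ∑ t ∈ range (a+b+c+l+2), C (2*t) (2*a+1) (2*c) * C (2*l) (2*b+1) (2*t) = 0 :=
        Finset.sum_eq_zero fun t _ => by rw [hC6 t c a, zero_mul]
      rw [hz, zero_add, Finset.sum_congr rfl (fun t _ => by rw [hL_oe, hR_eo])]
      exact P3 h h0 c a b l (a+b+c+l+2) (by omega)
  have red_ooo : ∀ a b c l : ℕ,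
      ∑ᶠ s : ℕ, (C s (2*a+1) (2*b+1) * C (2*l+1) (2*c+1) s - C s (2*a+1) (2*c+1) * C (2*l+1) (2*b+1) s)
      = ((if l = a+b+c+1 then (1:ℂ) else 0) + h c ((a:ℤ)+b-l)
         + (if c ≤ l then h a ((b:ℤ)+c-l) + h b ((a:ℤ)+c-l) else 0)
         + ∑ u ∈ range (a+b+c+l+2), h a ((b:ℤ)-u) * h c ((u:ℤ)-l-1)
         + ∑ u ∈ range (a+b+c+l+2), h b ((a:ℤ)-u) * h c ((u:ℤ)-l-1))
        - ((if l = a+c+b+1 then (1:ℂ) else 0) + h b ((a:ℤ)+c-l)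
           + (if b ≤ l then h a ((c:ℤ)+b-l) + h c ((a:ℤ)+b-l) else 0)
           + ∑ u ∈ range (a+b+c+l+2), h a ((c:ℤ)-u) * h b ((u:ℤ)-l-1)
           + ∑ u ∈ range (a+b+c+l+2), h c ((a:ℤ)-u) * h b ((u:ℤ)-l-1)) := by
    intro a b c l
    rw [hsub (2*a+1) (2*b+1) (2*c+1) (2*l+1) (a+b+c+l+2) (by omega) (by omega)]
    congr 1
    · rw [sum_parity_split (fun s => C s (2*a+1) (2*b+1) * C (2*l+1) (2*c+1) s) (a+b+c+l+2)]
      have hz : ∑ t ∈ range (a+b+c+l+2), C (2*t+1) (2*a+1) (2*b+1) * C (2*l+1) (2*c+1) (2*t+1) = 0 :=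
        Finset.sum_eq_zero fun t _ => by rw [hC8 t a b, zero_mul]
      rw [hz, add_zero, Finset.sum_congr rfl (fun t _ => by rw [hL_oo, hR_oo])]
      exact P6 h h0 a b c l (a+b+c+l+2) (by omega)
    · rw [sum_parity_split (fun s => C s (2*a+1) (2*c+1) * C (2*l+1) (2*b+1) s) (a+b+c+l+2)]
      have hz : ∑ t ∈ range (a+b+c+l+2), C (2*t+1) (2*a+1) (2*c+1) * C (2*l+1) (2*b+1) (2*t+1) = 0 :=
        Finset.sum_eq_zero fun t _ => by rw [hC8 t a c, zero_mul]
      rw [hz, add_zero, Finset.sum_congr rfl (fun t _ => by rw [hL_oo, hR_oo])]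
      exact P6 h h0 a c b l (a+b+c+l+2) (by omega)
  constructor
  · rintro ⟨R1s, R2s⟩
    have hR1 : ∀ m k n : ℕ, 1 ≤ n → h m ((k:ℤ)+n) - h (m+n) (k:ℤ)
        - ∑ s ∈ range n, h m (s:ℤ) * h (n-s-1) (k:ℤ) = 0 := by
      intro m k n hn
      have hthis := R1s m k n hn
      have e1 : ∑ s ∈ range n, H (2*m+1) (2*(s:ℤ)+1) * H (2*(n-s)-1) (2*(k:ℤ)+1)
          = ∑ s ∈ range n, h m (s:ℤ) * h (n-s-1) (k:ℤ) := by
        refine Finset.sum_congr rfl fun s hs => ?_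
        rw [Finset.mem_range] at hs
        rw [show 2*(n-s)-1 = 2*(n-s-1)+1 from by omega]
      rw [e1] at hthis
      exact hthis
    have hR2 : ∀ m n k : ℕ, 1 ≤ k → h m ((k:ℤ)+n) + h n ((k:ℤ)+m)
        + ∑ t ∈ range k, h m (t:ℤ) * h n ((k:ℤ)-t-1) = 0 := by
      intro m n k hk
      have hthis := R2s m n k hk
      have e2 : ∑ l ∈ range k, H (2*m+1) (2*(l:ℤ)+1) * H (2*n+1) (2*((k:ℤ)-l)-1)
          = ∑ l ∈ range k, h m (l:ℤ) * h n ((k:ℤ)-l-1) := by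
        refine Finset.sum_congr rfl fun s _ => ?_
        rw [show 2*((k:ℤ)-s)-1 = 2*((k:ℤ)-s-1)+1 from by ring]
      rw [e2] at hthis
      exact hthis
    intro i j k r
    rcases Nat.even_or_odd' i with ⟨a, rfl | rfl⟩ <;> rcases Nat.even_or_odd' j with ⟨b, rfl | rfl⟩ <;>
      rcases Nat.even_or_odd' k with ⟨c, rfl | rfl⟩ <;> rcases Nat.even_or_odd' r with ⟨l, rfl | rfl⟩
    · -- e e e e
      rw [red_eee a b c l, show (if l = a+c+b then (1:ℂ) else 0)
          = (if l = a+b+c then (1:ℂ) else 0) from if_congr (by omega) rfl rfl, sub_self]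
    · -- e e e o
      refine (finsum_congr fun s => ?_).trans finsum_zero
      rw [hker (2*a) (2*b) (2*c) (2*l+1) (by omega) s,
        hker (2*a) (2*c) (2*b) (2*l+1) (by omega) s, sub_zero]
    · -- e e o e
      refine (finsum_congr fun s => ?_).trans finsum_zero
      rw [hker (2*a) (2*b) (2*c+1) (2*l) (by omega) s,
        hker (2*a) (2*c+1) (2*b) (2*l) (by omega) s, sub_zero]
    · -- e e o o
      rw [red_eeo a b c l, show (if l = a+c+b then (1:ℂ) else 0)
          = (if l = a+b+c then (1:ℂ) else 0) from if_congr (by omega) rfl rfl]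
      have hA := lemA h h0 hR1 c a (a+b+c+l+2) ((b:ℤ)-l-1) (by omega)
      rw [show (a:ℤ)+((b:ℤ)-l-1) = (a:ℤ)+b-l-1 from by ring] at hA
      split_ifs at hA ⊢ <;> first | (exfalso; omega) | linear_combination -hA
    · -- e o e e
      refine (finsum_congr fun s => ?_).trans finsum_zero
      rw [hker (2*a) (2*b+1) (2*c) (2*l) (by omega) s,
        hker (2*a) (2*c) (2*b+1) (2*l) (by omega) s, sub_zero]
    · -- e o e o
      rw [red_eoe a b c l, show (if l = a+c+b then (1:ℂ) else 0)
          = (if l = a+b+c then (1:ℂ) else 0) from if_congr (by omega) rfl rfl]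
      have hA := lemA h h0 hR1 b a (a+b+c+l+2) ((c:ℤ)-l-1) (by omega)
      rw [show (a:ℤ)+((c:ℤ)-l-1) = (a:ℤ)+c-l-1 from by ring] at hA
      split_ifs at hA ⊢ <;> first | (exfalso; omega) | linear_combination hA
    · -- e o o e
      rw [red_eoo a b c l, show (if l = a+c+b+1 then (1:ℂ) else 0)
          = (if l = a+b+c+1 then (1:ℂ) else 0) from if_congr (by omega) rfl rfl]
      have hA1 := lemA h h0 hR1 b a (a+b+c+l+2) ((c:ℤ)-l) (by omega)
      rw [show (a:ℤ)+((c:ℤ)-l) = (a:ℤ)+c-l from by ring] at hA1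
      have hA2 := lemA h h0 hR1 c a (a+b+c+l+2) ((b:ℤ)-l) (by omega)
      rw [show (a:ℤ)+((b:ℤ)-l) = (a:ℤ)+b-l from by ring] at hA2
      have hB1 := lemB h h0 hR2 b a c l (a+b+c+l+2) (by omega)
      rw [show (b:ℤ)+a-l = (a:ℤ)+b-l from by ring,
        show (c:ℤ)+a-l = (a:ℤ)+c-l from by ring] at hB1
      have hB2 := lemB h h0 hR2 c a b l (a+b+c+l+2) (by omega)
      rw [show (c:ℤ)+a-l = (a:ℤ)+c-l from by ring,
        show (b:ℤ)+a-l = (a:ℤ)+b-l from by ring] at hB2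
      split_ifs at hA1 hA2 hB1 hB2 ⊢ <;>
        first | (exfalso; omega) | linear_combination hA1 - hA2 + hB1 - hB2
    · -- e o o o
      refine (finsum_congr fun s => ?_).trans finsum_zero
      rw [hker (2*a) (2*b+1) (2*c+1) (2*l+1) (by omega) s,
        hker (2*a) (2*c+1) (2*b+1) (2*l+1) (by omega) s, sub_zero]
    · -- o e e e
      refine (finsum_congr fun s => ?_).trans finsum_zero
      rw [hker (2*a+1) (2*b) (2*c) (2*l) (by omega) s,
        hker (2*a+1) (2*c) (2*b) (2*l) (by omega) s, sub_zero]
    · -- o e e o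
      rw [red_oee a b c l, show (if l = c+a+b then (1:ℂ) else 0)
          = (if l = b+a+c then (1:ℂ) else 0) from if_congr (by omega) rfl rfl,
        show (c:ℤ)+b-l-1 = (b:ℤ)+c-l-1 from by ring]
      have hA1 := lemA h h0 hR1 a b (a+b+c+l+2) ((c:ℤ)-l-1) (by omega)
      rw [show (b:ℤ)+((c:ℤ)-l-1) = (b:ℤ)+c-l-1 from by ring] at hA1
      have hA2 := lemA h h0 hR1 a c (a+b+c+l+2) ((b:ℤ)-l-1) (by omega)
      rw [show (c:ℤ)+((b:ℤ)-l-1) = (b:ℤ)+c-l-1 from by ring] at hA2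
      split_ifs at hA1 hA2 ⊢ <;> first | (exfalso; omega) | linear_combination hA1 - hA2
    · -- o e o e
      rw [red_oeo a b c l, show (if l = a+c+b+1 then (1:ℂ) else 0)
          = (if l = b+a+c+1 then (1:ℂ) else 0) from if_congr (by omega) rfl rfl,
        show (c:ℤ)+b-l = (b:ℤ)+c-l from by ring,
        show (a:ℤ)+b-l = (b:ℤ)+a-l from by ring]
      have hA := lemA h h0 hR1 a b (a+b+c+l+2) ((c:ℤ)-l) (by omega)
      rw [show (b:ℤ)+((c:ℤ)-l) = (b:ℤ)+c-l from by ring] at hA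
      have hB := lemB h h0 hR2 a b c l (a+b+c+l+2) (by omega)
      rw [show (a:ℤ)+b-l = (b:ℤ)+a-l from by ring,
        show (c:ℤ)+b-l = (b:ℤ)+c-l from by ring] at hB
      split_ifs at hA hB ⊢ <;> first | (exfalso; omega) | linear_combination hA + hB
    · -- o e o o
      refine (finsum_congr fun s => ?_).trans finsum_zero
      rw [hker (2*a+1) (2*b) (2*c+1) (2*l+1) (by omega) s,
        hker (2*a+1) (2*c+1) (2*b) (2*l+1) (by omega) s, sub_zero]
    · -- o o e e
      rw [red_ooe a b c l, show (if l = c+a+b+1 then (1:ℂ) else 0)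
          = (if l = a+b+c+1 then (1:ℂ) else 0) from if_congr (by omega) rfl rfl,
        show (c:ℤ)+a-l = (a:ℤ)+c-l from by ring,
        show (c:ℤ)+b-l = (b:ℤ)+c-l from by ring]
      have hA := lemA h h0 hR1 a c (a+b+c+l+2) ((b:ℤ)-l) (by omega)
      rw [show (c:ℤ)+((b:ℤ)-l) = (b:ℤ)+c-l from by ring] at hA
      have hB := lemB h h0 hR2 a c b l (a+b+c+l+2) (by omega)
      split_ifs at hA hB ⊢ <;> first | (exfalso; omega) | linear_combination -hA - hB
    · -- o o e o
      refine (finsum_congr fun s => ?_).trans finsum_zero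
      rw [hker (2*a+1) (2*b+1) (2*c) (2*l+1) (by omega) s,
        hker (2*a+1) (2*c) (2*b+1) (2*l+1) (by omega) s, sub_zero]
    · -- o o o e
      refine (finsum_congr fun s => ?_).trans finsum_zero
      rw [hker (2*a+1) (2*b+1) (2*c+1) (2*l) (by omega) s,
        hker (2*a+1) (2*c+1) (2*b+1) (2*l) (by omega) s, sub_zero]
    · -- o o o o
      rw [red_ooo a b c l, show (if l = a+c+b+1 then (1:ℂ) else 0)
          = (if l = a+b+c+1 then (1:ℂ) else 0) from if_congr (by omega) rfl rfl,
        show (c:ℤ)+b-l = (b:ℤ)+c-l from by ring]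
      have hB1 := lemB2 h h0 hR2 a b c l (a+b+c+l+2) (by omega)
      rw [show (c:ℤ)+b-l = (b:ℤ)+c-l from by ring] at hB1
      have hB2 := lemB2 h h0 hR2 b a c l (a+b+c+l+2) (by omega)
      rw [show (b:ℤ)+a-l = (a:ℤ)+b-l from by ring,
        show (c:ℤ)+a-l = (a:ℤ)+c-l from by ring] at hB2
      have hB3 := lemB2 h h0 hR2 a c b l (a+b+c+l+2) (by omega)
      have hB4 := lemB2 h h0 hR2 c a b l (a+b+c+l+2) (by omega)
      rw [show (c:ℤ)+a-l = (a:ℤ)+c-l from by ring,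
        show (b:ℤ)+a-l = (a:ℤ)+b-l from by ring] at hB4
      split_ifs at hB1 hB2 hB3 hB4 ⊢ <;>
        first | (exfalso; omega) | linear_combination hB1 + hB2 - hB3 - hB4
  · intro hAs
    have hR1 : ∀ m k n : ℕ, 1 ≤ n → h m ((k:ℤ)+n) - h (m+n) (k:ℤ)
        - ∑ s ∈ range n, h m (s:ℤ) * h (n-s-1) (k:ℤ) = 0 := by
      intro m k n hn
      have h2 := hAs (2*n) (2*(k+1)) (2*m+1) (2*0+1)
      rw [red_eeo n (k+1) m 0] at h2
      rw [if_neg (show ¬(0 = n+(k+1)+m) from by omega),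
        if_neg (show ¬(0 = n+m+(k+1)) from by omega),
        if_neg (show ¬(k+1 ≤ 0) from by omega)] at h2
      simp only [Nat.cast_zero, sub_zero] at h2
      rw [show (n:ℤ)+((k+1:ℕ):ℤ)-1 = (k:ℤ)+n from by omega,
        show ((k+1:ℕ):ℤ)-1 = (k:ℤ) from by omega] at h2
      rw [conv1 h h0 m k n (n+(k+1)+m+0+2) (by omega)] at h2
      linear_combination h2
    have hR2 : ∀ m n k : ℕ, 1 ≤ k → h m ((k:ℤ)+n) + h n ((k:ℤ)+m)
        + ∑ t ∈ range k, h m (t:ℤ) * h n ((k:ℤ)-t-1) = 0 := by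
      intro m n k hk
      have h2 := hAs (2*n+1) (2*k) (2*m+1) (2*0)
      rw [red_oeo n k m 0] at h2
      rw [if_neg (show ¬(0 = k+n+m+1) from by omega),
        if_neg (show ¬(m+1 ≤ 0) from by omega),
        if_neg (show ¬(0 = n+m+k+1) from by omega),
        if_neg (show ¬(k ≤ 0) from by omega)] at h2
      simp only [Nat.cast_zero, sub_zero] at h2
      have hAl := lemA h h0 hR1 n k (n+k+m+0+2) ((m:ℤ)) (by omega)
      rw [if_pos (show (0:ℤ) ≤ (m:ℤ) from by omega)] at hAl
      have hconv := conv2 h h0 m n k (n+k+m+0+2) (by omega)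
      linear_combination h2 - hAl - hconv
    refine ⟨fun m k n hn => ?_, fun m n k hk => ?_⟩
    · have hthis := hR1 m k n hn
      have e1 : ∑ s ∈ range n, H (2*m+1) (2*(s:ℤ)+1) * H (2*(n-s)-1) (2*(k:ℤ)+1)
          = ∑ s ∈ range n, h m (s:ℤ) * h (n-s-1) (k:ℤ) := by
        refine Finset.sum_congr rfl fun s hs => ?_
        rw [Finset.mem_range] at hs
        rw [show 2*(n-s)-1 = 2*(n-s-1)+1 from by omega]
      rw [e1]
      exact hthis
    · have hthis := hR2 m n k hk
      have e2 : ∑ l ∈ range k, H (2*m+1) (2*(l:ℤ)+1) * H (2*n+1) (2*((k:ℤ)-l)-1)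
          = ∑ l ∈ range k, h m (l:ℤ) * h n ((k:ℤ)-l-1) := by
        refine Finset.sum_congr rfl fun s _ => ?_
        rw [show 2*((k:ℤ)-s)-1 = 2*((k:ℤ)-s-1)+1 from by ring]
      rw [e2]
      exact hthis
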